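/- Correctness of the multiplicative Viterbi recursion: for every time horizon t, the maximum over all state paths z : Fin (t+1) → S of the path weight W(z) equals the maximum over states i of the Viterbi value δ t i; that is, max_{z : Fin (t+1) → S} W(z) = max_{i ∈ S} δ t i. -/

import Mathlib

private lemma mul_sup'_real {α : Type*} (s : Finset α) (hs : s.Nonempty) (f : α → ℝ)
    {c : ℝ} (hc : 0 ≤ c) : c * s.sup' hs f = s.sup' hs fun a => c * f a := by
  exact Finset.comp_sup'_eq_sup'_comp hs (fun x => c * x)
    (fun x y => by simpa using mul_max_of_nonneg x y hc)

private def Wt {S : Type*} (π : S → ℝ) (A : S → S → ℝ) (b : ℕ → S → ℝ)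
    (t : ℕ) (z : Fin (t + 1) → S) : ℝ :=
  π (z 0) * b 0 (z 0) *
    ∏ k : Fin t, (A (z k.castSucc) (z k.succ) * b ((k : ℕ) + 1) (z k.succ))

private lemma Wt_succ {S : Type*} (π : S → ℝ) (A : S → S → ℝ) (b : ℕ → S → ℝ)
    (t : ℕ) (y : Fin (t + 2) → S) :
    Wt π A b (t + 1) y =
      Wt π A b t (Fin.init y) *
        (A (y (Fin.castSucc (Fin.last t))) (y (Fin.last (t + 1))) *
          b (t + 1) (y (Fin.last (t + 1)))) := by
  unfold Wt
  rw [Fin.prod_univ_castSucc]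
  simp only [Fin.init, Fin.succ_castSucc, Fin.coe_castSucc, Fin.succ_last,
    Fin.castSucc_zero, Fin.val_last, Nat.succ_eq_add_one]
  ring

private lemma Wt_nonneg {S : Type*} {π : S → ℝ} {A : S → S → ℝ} {b : ℕ → S → ℝ}
    (hπ : ∀ i, 0 ≤ π i) (hA : ∀ j i, 0 ≤ A j i) (hb : ∀ t i, 0 ≤ b t i)
    (t : ℕ) (z : Fin (t + 1) → S) : 0 ≤ Wt π A b t z := by
  unfold Wt
  have : (0:ℝ) ≤ π (z 0) * b 0 (z 0) := mul_nonneg (hπ _) (hb _ _)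
  exact mul_nonneg this (Finset.prod_nonneg fun k _ => mul_nonneg (hA _ _) (hb _ _))

private lemma viterbi_delta_eq {S : Type*} [Fintype S] [Nonempty S]
    (π : S → ℝ) (A : S → S → ℝ) (b : ℕ → S → ℝ)
    (hπ : ∀ i, 0 ≤ π i) (hA : ∀ j i, 0 ≤ A j i) (hb : ∀ t i, 0 ≤ b t i)
    (δ : ℕ → S → ℝ)
    (hδ0 : ∀ i, δ 0 i = π i * b 0 i)
    (hδsucc : ∀ t i, δ (t + 1) i =
      b (t + 1) i * (Finset.univ.sup' Finset.univ_nonempty fun j => A j i * δ t j))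
    (t : ℕ) (i : S) :
    δ t i = Finset.univ.sup' Finset.univ_nonempty
      (fun z : Fin t → S => Wt π A b t (Fin.snoc z i)) := by
  induction t generalizing i with
  | zero =>
    rw [hδ0]
    have hconst : ∀ z : Fin 0 → S, Wt π A b 0 (Fin.snoc z i) = π i * b 0 i := by
      intro z
      unfold Wt
      rw [show (0 : Fin 1) = Fin.last 0 from rfl, Fin.snoc_last]
      simp
    rw [Finset.sup'_congr _ rfl (fun z _ => hconst z), Finset.sup'_const]
  | succ t ih =>
    apply le_antisymm
    · rw [hδsucc]
      rw [mul_sup'_real _ _ _ (hb (t+1) i)]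
      apply Finset.sup'_le
      intro j _
      rw [ih j, mul_sup'_real _ _ _ (hA j i), mul_sup'_real _ _ _ (hb (t+1) i)]
      apply Finset.sup'_le
      intro z _
      have key : Wt π A b (t+1) (Fin.snoc (Fin.snoc z j) i)
          = Wt π A b t (Fin.snoc z j) * (A j i * b (t+1) i) := by
        rw [Wt_succ]
        simp only [Fin.init_snoc, Fin.snoc_last, Fin.snoc_castSucc]
      calc b (t+1) i * (A j i * Wt π A b t (Fin.snoc z j))
          = Wt π A b (t+1) (Fin.snoc (Fin.snoc z j) i) := by rw [key]; ring
        _ ≤ _ := Finset.le_sup' (fun w : Fin (t+1) → S => Wt π A b (t+1) (Fin.snoc w i))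
            (Finset.mem_univ (Fin.snoc z j))
    · apply Finset.sup'_le
      intro z _
      have key : Wt π A b (t+1) (Fin.snoc z i)
          = Wt π A b t z * (A (z (Fin.last t)) i * b (t+1) i) := by
        rw [Wt_succ]
        simp only [Fin.init_snoc, Fin.snoc_last, Fin.snoc_castSucc]
      have hz : Wt π A b t z ≤ δ t (z (Fin.last t)) := by
        rw [ih (z (Fin.last t))]
        have := Finset.le_sup' (fun w : Fin t → S =>
          Wt π A b t (Fin.snoc w (z (Fin.last t))))
          (Finset.mem_univ (Fin.init z))
        simpa only [Fin.snoc_init_self] using this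
      have h1 : Wt π A b (t+1) (Fin.snoc z i)
          ≤ δ t (z (Fin.last t)) * (A (z (Fin.last t)) i * b (t+1) i) := by
        rw [key]
        exact mul_le_mul_of_nonneg_right hz (mul_nonneg (hA _ _) (hb _ _))
      refine h1.trans ?_
      rw [hδsucc]
      have h2 : A (z (Fin.last t)) i * δ t (z (Fin.last t))
          ≤ Finset.univ.sup' Finset.univ_nonempty fun j => A j i * δ t j :=
        Finset.le_sup' (fun j => A j i * δ t j) (Finset.mem_univ _)
      calc δ t (z (Fin.last t)) * (A (z (Fin.last t)) i * b (t+1) i)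
          = b (t+1) i * (A (z (Fin.last t)) i * δ t (z (Fin.last t))) := by ring
        _ ≤ _ := mul_le_mul_of_nonneg_left h2 (hb _ _)

/-- Correctness of the multiplicative Viterbi recursion: the maximum over all state paths
`z : Fin (t+1) → S` of the path weight equals the maximum over states of the Viterbi value. -/
theorem viterbi_max_recursion_correct
    {S : Type*} [Fintype S] [Nonempty S]
    (π : S → ℝ) (A : S → S → ℝ) (b : ℕ → S → ℝ)
    (hπ : ∀ i, 0 ≤ π i) (hA : ∀ j i, 0 ≤ A j i) (hb : ∀ t i, 0 ≤ b t i)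
    (δ : ℕ → S → ℝ)
    (hδ0 : ∀ i, δ 0 i = π i * b 0 i)
    (hδsucc : ∀ t i, δ (t + 1) i =
      b (t + 1) i * (Finset.univ.sup' Finset.univ_nonempty fun j => A j i * δ t j))
    (t : ℕ) :
    (Finset.univ.sup' Finset.univ_nonempty fun z : Fin (t + 1) → S =>
        π (z 0) * b 0 (z 0) *
          ∏ k : Fin t, (A (z k.castSucc) (z k.succ) * b ((k : ℕ) + 1) (z k.succ)))
      = Finset.univ.sup' Finset.univ_nonempty fun i => δ t i := by
  have hW : (fun z : Fin (t + 1) → S =>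
      π (z 0) * b 0 (z 0) *
        ∏ k : Fin t, (A (z k.castSucc) (z k.succ) * b ((k : ℕ) + 1) (z k.succ)))
      = Wt π A b t := rfl
  rw [hW]
  apply le_antisymm
  · apply Finset.sup'_le
    intro z _
    have hz : Wt π A b t z ≤ δ t (z (Fin.last t)) := by
      rw [viterbi_delta_eq π A b hπ hA hb δ hδ0 hδsucc t (z (Fin.last t))]
      have := Finset.le_sup' (fun w : Fin t → S =>
        Wt π A b t (Fin.snoc w (z (Fin.last t)))) (Finset.mem_univ (Fin.init z))
      simpa only [Fin.snoc_init_self] using this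
    exact hz.trans (Finset.le_sup' _ (Finset.mem_univ _))
  · apply Finset.sup'_le
    intro i _
    rw [viterbi_delta_eq π A b hπ hA hb δ hδ0 hδsucc t i]
    apply Finset.sup'_le
    intro z _
    exact Finset.le_sup' (fun w : Fin (t+1) → S => Wt π A b t w)
      (Finset.mem_univ (Fin.snoc z i))
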